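/- Let g : 𝔻 → 𝔻 be holomorphic with angular limit g(z) → σ as z → σ for some σ ∈ ∂𝔻. Then g has finite angular derivative at σ (is regular at σ) if and only if liminf_{z→σ} (1-|g(z)|)/(1-|z|) < +∞; and in that case the angular limit of (σ - g(z))/(σ - z) equals this liminf. -/

import Mathlib

open Filter Metric Complex Set

/-- the complex absolute value, as an absolute value (port helper) -/
noncomputable def Complex.abs : AbsoluteValue ℂ ℝ where
  toFun z := ‖z‖
  map_mul' := norm_mul
  nonneg' := norm_nonneg
  eq_zero' _ := norm_eq_zero
  add_le' := norm_add_le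

lemma Complex.norm_eq_abs (z : ℂ) : ‖z‖ = Complex.abs z := rfl

lemma Complex.abs_apply (z : ℂ) : Complex.abs z = Real.sqrt (normSq z) := Complex.norm_def z

lemma Complex.sq_abs (z : ℂ) : Complex.abs z ^ 2 = normSq z := Complex.sq_norm z

lemma Complex.abs_conj (z : ℂ) : Complex.abs ((starRingEnd ℂ) z) = Complex.abs z :=
  Complex.norm_conj z

lemma Complex.abs_ofReal (r : ℝ) : Complex.abs (r : ℂ) = |r| := by
  rw [← Complex.norm_eq_abs, Complex.norm_real, Real.norm_eq_abs]

lemma Complex.continuous_abs : Continuous Complex.abs := continuous_norm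

lemma Complex.abs_I : Complex.abs I = 1 := Complex.norm_I

lemma Complex.re_le_abs (z : ℂ) : z.re ≤ Complex.abs z := Complex.re_le_norm z

lemma Complex.abs_le_abs_of_mapsTo_ball_self {f : ℂ → ℂ} {z : ℂ}
    (hd : DifferentiableOn ℂ f (ball 0 1)) (h_maps : MapsTo f (ball 0 1) (ball 0 1))
    (h₀ : f 0 = 0) (hz : Complex.abs z < 1) : Complex.abs (f z) ≤ Complex.abs z :=
  Complex.norm_le_norm_of_mapsTo_ball hd (h_maps.mono_right ball_subset_closedBall) h₀ hz

namespace JWCaux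

/-- key identity 1 -/
lemma normSq_one_sub_conj_mul (a z : ℂ) :
    normSq (1 - (starRingEnd ℂ) a * z) - normSq (a - z)
      = (1 - normSq a) * (1 - normSq z) := by
  simp only [normSq_apply, mul_re, mul_im, sub_re, sub_im, one_re, one_im, conj_re, conj_im]
  ring

/-- key identity 2 -/
lemma normSq_add_conj (u v : ℂ) :
    normSq (u + (starRingEnd ℂ) v) - normSq (u - v) = 4 * (u.re * v.re) := by
  simp only [normSq_apply, add_re, add_im, sub_re, sub_im, conj_re, conj_im]
  ring

lemma abs_lt_abs_of_normSq_lt {x y : ℂ} (h : normSq x < normSq y) :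
    Complex.abs x < Complex.abs y := by
  rw [Complex.abs_apply, Complex.abs_apply]
  exact Real.sqrt_lt_sqrt (normSq_nonneg x) h

lemma normSq_lt_one {z : ℂ} (h : Complex.abs z < 1) : normSq z < 1 := by
  have := Complex.sq_abs z
  nlinarith [Complex.abs.nonneg z]

/-- the Möbius transform of the disc -/
noncomputable def moeb (a z : ℂ) : ℂ := (a - z) / (1 - (starRingEnd ℂ) a * z)

lemma one_sub_conj_mul_ne_zero {a z : ℂ} (ha : Complex.abs a < 1) (hz : Complex.abs z ≤ 1) :
    1 - (starRingEnd ℂ) a * z ≠ 0 := by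
  intro h
  have h2 : (1:ℂ) = (starRingEnd ℂ) a * z := by linear_combination h
  have := congrArg Complex.abs h2
  simp only [map_one, map_mul, Complex.abs_conj] at this
  nlinarith [Complex.abs.nonneg a, Complex.abs.nonneg z]

lemma abs_moeb_lt_one {a z : ℂ} (ha : Complex.abs a < 1) (hz : Complex.abs z < 1) :
    Complex.abs (moeb a z) < 1 := by
  have hne := one_sub_conj_mul_ne_zero ha hz.le
  have hpos : 0 < Complex.abs (1 - (starRingEnd ℂ) a * z) := by
    simpa [Complex.abs.pos_iff] using hne
  rw [moeb, map_div₀, div_lt_one hpos]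
  refine abs_lt_abs_of_normSq_lt ?_
  have h1 := normSq_one_sub_conj_mul a z
  nlinarith [normSq_lt_one ha, normSq_lt_one hz]

lemma moeb_moeb {a z : ℂ} (ha : Complex.abs a < 1) (hz : Complex.abs z < 1) :
    moeb a (moeb a z) = z := by
  have hne := one_sub_conj_mul_ne_zero ha hz.le
  have hkey : 1 - (starRingEnd ℂ) a * moeb a z
      = (1 - (normSq a : ℂ)) / (1 - (starRingEnd ℂ) a * z) := by
    rw [moeb]
    field_simp
    linear_combination -Complex.mul_conj a
  have hna : (1 : ℂ) - (normSq a : ℂ) ≠ 0 := by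
    intro h
    have : (normSq a : ℂ) = 1 := by linear_combination -h
    have : normSq a = 1 := by exact_mod_cast this
    nlinarith [normSq_lt_one ha]
  rw [moeb, hkey, moeb]
  have hne' : 1 - z * (starRingEnd ℂ) a ≠ 0 := by rwa [mul_comm]
  field_simp
  linear_combination -z * Complex.mul_conj a

lemma moeb_differentiableOn {a : ℂ} (ha : Complex.abs a < 1) :
    DifferentiableOn ℂ (moeb a) (ball 0 1) := by
  apply DifferentiableOn.div
  · exact (differentiableOn_const a).sub differentiableOn_id
  · exact (differentiableOn_const 1).sub ((differentiableOn_const _).mul differentiableOn_id)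
  · intro z hz
    exact one_sub_conj_mul_ne_zero ha (le_of_lt (by simpa [Complex.abs.pos_iff, mem_ball,
      Complex.dist_eq, sub_zero, Complex.norm_eq_abs] using hz))

lemma mem_ball_iff_abs {z : ℂ} : z ∈ ball (0:ℂ) 1 ↔ Complex.abs z < 1 := by
  simp [mem_ball, Complex.dist_eq, Complex.norm_eq_abs]

lemma moeb_self (a : ℂ) : moeb a a = 0 := by simp [moeb]

lemma moeb_zero (a : ℂ) : moeb a 0 = a := by simp [moeb]

/-- Schwarz–Pick inequality for self-maps of the unit disc. -/
lemma schwarz_pick {f : ℂ → ℂ} (hf : DifferentiableOn ℂ f (ball 0 1))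
    (hmaps : MapsTo f (ball 0 1) (ball 0 1)) {z z₀ : ℂ}
    (hz : Complex.abs z < 1) (hz₀ : Complex.abs z₀ < 1) :
    Complex.abs (f z - f z₀) * Complex.abs (1 - (starRingEnd ℂ) z₀ * z)
      ≤ Complex.abs (z - z₀) * Complex.abs (1 - (starRingEnd ℂ) (f z₀) * f z) := by
  have hfz₀ : Complex.abs (f z₀) < 1 := mem_ball_iff_abs.1 (hmaps (mem_ball_iff_abs.2 hz₀))
  have hfz : Complex.abs (f z) < 1 := mem_ball_iff_abs.1 (hmaps (mem_ball_iff_abs.2 hz))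
  -- the composed map
  set h : ℂ → ℂ := fun ζ => moeb (f z₀) (f (moeb z₀ ζ)) with hh
  have hmap1 : MapsTo (moeb z₀) (ball (0:ℂ) 1) (ball (0:ℂ) 1) := fun ζ hζ =>
    mem_ball_iff_abs.2 (abs_moeb_lt_one hz₀ (mem_ball_iff_abs.1 hζ))
  have hdiff : DifferentiableOn ℂ h (ball 0 1) := by
    apply DifferentiableOn.comp (moeb_differentiableOn hfz₀)
    · exact DifferentiableOn.comp hf (moeb_differentiableOn hz₀) hmap1
    · intro ζ hζ
      exact hmaps (hmap1 hζ)
  have hmapsh : MapsTo h (ball (0:ℂ) 1) (ball (0:ℂ) 1) := by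
    intro ζ hζ
    exact mem_ball_iff_abs.2 (abs_moeb_lt_one hfz₀
      (mem_ball_iff_abs.1 (hmaps (hmap1 hζ))))
  have h0 : h 0 = 0 := by
    simp only [hh, moeb_zero, moeb_self]
  have hζmem : Complex.abs (moeb z₀ z) < 1 := abs_moeb_lt_one hz₀ hz
  have hS := Complex.abs_le_abs_of_mapsTo_ball_self hdiff hmapsh h0 hζmem
  have hval : h (moeb z₀ z) = moeb (f z₀) (f z) := by
    rw [hh]; simp only; rw [moeb_moeb hz₀ hz]
  rw [hval] at hS
  -- unfold the two Möbius quotients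
  have d1 : Complex.abs (1 - (starRingEnd ℂ) (f z₀) * f z) > 0 := by
    simpa [Complex.abs.pos_iff] using one_sub_conj_mul_ne_zero hfz₀ hfz.le
  have d2 : Complex.abs (1 - (starRingEnd ℂ) z₀ * z) > 0 := by
    simpa [Complex.abs.pos_iff] using one_sub_conj_mul_ne_zero hz₀ hz.le
  rw [moeb, moeb, map_div₀, map_div₀, div_le_div_iff₀ d1 d2] at hS
  calc Complex.abs (f z - f z₀) * Complex.abs (1 - (starRingEnd ℂ) z₀ * z)
      = Complex.abs (f z₀ - f z) * Complex.abs (1 - (starRingEnd ℂ) z₀ * z) := by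
        rw [Complex.abs.map_sub]
    _ ≤ Complex.abs (z₀ - z) * Complex.abs (1 - (starRingEnd ℂ) (f z₀) * f z) := hS
    _ = Complex.abs (z - z₀) * Complex.abs (1 - (starRingEnd ℂ) (f z₀) * f z) := by
        rw [Complex.abs.map_sub]

/-- Schwarz–Pick, `normSq` form. -/
lemma schwarz_pick_normSq {f : ℂ → ℂ} (hf : DifferentiableOn ℂ f (ball 0 1))
    (hmaps : MapsTo f (ball 0 1) (ball 0 1)) {z z₀ : ℂ}
    (hz : Complex.abs z < 1) (hz₀ : Complex.abs z₀ < 1) :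
    (1 - normSq z) * (1 - normSq z₀) * normSq (1 - (starRingEnd ℂ) (f z₀) * f z)
      ≤ (1 - normSq (f z)) * (1 - normSq (f z₀)) * normSq (1 - (starRingEnd ℂ) z₀ * z) := by
  have hfz₀ : Complex.abs (f z₀) < 1 := mem_ball_iff_abs.1 (hmaps (mem_ball_iff_abs.2 hz₀))
  have hfz : Complex.abs (f z) < 1 := mem_ball_iff_abs.1 (hmaps (mem_ball_iff_abs.2 hz))
  have hSP := schwarz_pick hf hmaps hz hz₀
  have hsq : normSq (f z - f z₀) * normSq (1 - (starRingEnd ℂ) z₀ * z)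
      ≤ normSq (z - z₀) * normSq (1 - (starRingEnd ℂ) (f z₀) * f z) := by
    have h1 := Complex.sq_abs (f z - f z₀)
    have h2 := Complex.sq_abs (1 - (starRingEnd ℂ) z₀ * z)
    have h3 := Complex.sq_abs (z - z₀)
    have h4 := Complex.sq_abs (1 - (starRingEnd ℂ) (f z₀) * f z)
    nlinarith [Complex.abs.nonneg (f z - f z₀), Complex.abs.nonneg (1 - (starRingEnd ℂ) z₀ * z),
      Complex.abs.nonneg (z - z₀), Complex.abs.nonneg (1 - (starRingEnd ℂ) (f z₀) * f z),
      mul_nonneg (Complex.abs.nonneg (f z - f z₀)) (Complex.abs.nonneg (1 - (starRingEnd ℂ) z₀ * z)),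
      mul_nonneg (Complex.abs.nonneg (z - z₀)) (Complex.abs.nonneg (1 - (starRingEnd ℂ) (f z₀) * f z))]
  have hid1 := normSq_one_sub_conj_mul (f z₀) (f z)
  have hid2 := normSq_one_sub_conj_mul z₀ z
  have e1 : normSq (f z₀ - f z) = normSq (f z - f z₀) := by
    rw [show f z₀ - f z = -(f z - f z₀) by ring, normSq_neg]
  have e2 : normSq (z₀ - z) = normSq (z - z₀) := by
    rw [show z₀ - z = -(z - z₀) by ring, normSq_neg]
  rw [e1] at hid1
  rw [e2] at hid2
  nlinarith [normSq_nonneg (1 - (starRingEnd ℂ) (f z₀) * f z),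
    normSq_nonneg (1 - (starRingEnd ℂ) z₀ * z), normSq_nonneg (z - z₀),
    normSq_nonneg (f z - f z₀)]

lemma re_div_eq (p q : ℂ) : (p / q).re = (p * (starRingEnd ℂ) q).re / normSq q := by
  rcases eq_or_ne q 0 with rfl | hq
  · simp
  · have hcq : (starRingEnd ℂ) q ≠ 0 := by simpa using hq
    have h : p / q = p * (starRingEnd ℂ) q / ((normSq q : ℝ) : ℂ) := by
      rw [← Complex.mul_conj q]
      rw [mul_div_mul_right _ _ hcq]
    rw [h, Complex.div_ofReal_re]

/-- The Cayley-type map of the disc onto the right half-plane sending `0 ↦ w₀`. -/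
noncomputable def cay (w₀ ζ : ℂ) : ℂ := (w₀ + (starRingEnd ℂ) w₀ * ζ) / (1 - ζ)

lemma re_cay {w₀ ζ : ℂ} (h : 0 < w₀.re) (hζ : Complex.abs ζ < 1) :
    0 < (cay w₀ ζ).re := by
  have h1 : (1:ℂ) - ζ ≠ 0 := by
    intro hc
    have : ζ = 1 := by linear_combination -hc
    rw [this] at hζ; simp at hζ
  rw [cay, re_div_eq]
  have hnum : ((w₀ + (starRingEnd ℂ) w₀ * ζ) * (starRingEnd ℂ) (1 - ζ)).re
      = w₀.re * (1 - normSq ζ) := by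
    simp only [map_sub, map_one, normSq_apply, mul_re, mul_im, add_re, add_im, sub_re, sub_im,
      one_re, one_im, conj_re, conj_im]
    ring
  rw [hnum]
  have h2 := normSq_lt_one hζ
  have h3 : 0 < normSq (1 - ζ) := normSq_pos.2 h1
  have h4 : 0 < 1 - normSq ζ := by linarith
  positivity
lemma cay_zero (w₀ : ℂ) : cay w₀ 0 = w₀ := by simp [cay]

lemma cay_differentiableOn (w₀ : ℂ) : DifferentiableOn ℂ (cay w₀) (ball 0 1) := by
  apply DifferentiableOn.div
  · exact (differentiableOn_const _).add ((differentiableOn_const _).mul differentiableOn_id)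
  · exact (differentiableOn_const 1).sub differentiableOn_id
  · intro ζ hζ
    intro hc
    have : ζ = 1 := by linear_combination -hc
    rw [this] at hζ
    simp [mem_ball, Complex.dist_eq] at hζ

lemma cay_eval {w w₀ : ℂ} (hw : 0 < w.re) (hw₀ : 0 < w₀.re) :
    cay w₀ ((w - w₀) / (w + (starRingEnd ℂ) w₀)) = w := by
  have hden : w + (starRingEnd ℂ) w₀ ≠ 0 := by
    intro hc
    have : (w + (starRingEnd ℂ) w₀).re = 0 := by rw [hc]; simp
    simp only [add_re, conj_re] at this
    linarith
  have hsum : w₀ + (starRingEnd ℂ) w₀ ≠ 0 := by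
    intro hc
    have : (w₀ + (starRingEnd ℂ) w₀).re = 0 := by rw [hc]; simp
    simp only [add_re, conj_re] at this
    linarith
  rw [cay]
  have h1 : (1:ℂ) - (w - w₀) / (w + (starRingEnd ℂ) w₀)
      = (w₀ + (starRingEnd ℂ) w₀) / (w + (starRingEnd ℂ) w₀) := by
    field_simp
    ring
  rw [h1]
  field_simp
  ring

/-- membership in the disc for half-plane quotients -/
lemma abs_hp_quot_lt_one {u v : ℂ} (hu : 0 < u.re) (hv : 0 < v.re) :
    Complex.abs ((u - v) / (u + (starRingEnd ℂ) v)) < 1 := by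
  have hden : u + (starRingEnd ℂ) v ≠ 0 := by
    intro hc
    have : (u + (starRingEnd ℂ) v).re = 0 := by rw [hc]; simp
    simp only [add_re, conj_re] at this
    linarith
  have hpos : 0 < Complex.abs (u + (starRingEnd ℂ) v) := by
    simpa [Complex.abs.pos_iff] using hden
  rw [map_div₀, div_lt_one hpos]
  refine abs_lt_abs_of_normSq_lt ?_
  have := normSq_add_conj u v
  nlinarith

/-- Schwarz–Pick for holomorphic maps of the right half-plane into itself. -/
lemma hp_schwarz_pick {Θ : ℂ → ℂ} (hΘ : DifferentiableOn ℂ Θ {w : ℂ | 0 < w.re})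
    (hre : ∀ w, 0 < w.re → 0 < (Θ w).re) {w w₀ : ℂ} (hw : 0 < w.re) (hw₀ : 0 < w₀.re) :
    Complex.abs (Θ w - Θ w₀) * Complex.abs (w + (starRingEnd ℂ) w₀)
      ≤ Complex.abs (w - w₀) * Complex.abs (Θ w + (starRingEnd ℂ) (Θ w₀)) := by
  set h : ℂ → ℂ := fun ζ =>
    (Θ (cay w₀ ζ) - Θ w₀) / (Θ (cay w₀ ζ) + (starRingEnd ℂ) (Θ w₀)) with hh
  have hcaymem : ∀ ζ ∈ ball (0:ℂ) 1, cay w₀ ζ ∈ {w : ℂ | 0 < w.re} := by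
    intro ζ hζ
    exact re_cay hw₀ (mem_ball_iff_abs.1 hζ)
  have hΘcay : DifferentiableOn ℂ (fun ζ => Θ (cay w₀ ζ)) (ball 0 1) :=
    DifferentiableOn.comp hΘ (cay_differentiableOn w₀) hcaymem
  have hdenne : ∀ ζ ∈ ball (0:ℂ) 1, Θ (cay w₀ ζ) + (starRingEnd ℂ) (Θ w₀) ≠ 0 := by
    intro ζ hζ hc
    have h2 : (Θ (cay w₀ ζ) + (starRingEnd ℂ) (Θ w₀)).re = 0 := by rw [hc]; simp
    simp only [add_re, conj_re] at h2
    have := hre _ (hcaymem ζ hζ)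
    have := hre _ hw₀
    linarith
  have hdiff : DifferentiableOn ℂ h (ball 0 1) :=
    DifferentiableOn.div (hΘcay.sub (differentiableOn_const _))
      (hΘcay.add (differentiableOn_const _)) hdenne
  have hmapsh : MapsTo h (ball (0:ℂ) 1) (ball (0:ℂ) 1) := by
    intro ζ hζ
    exact mem_ball_iff_abs.2 (abs_hp_quot_lt_one (hre _ (hcaymem ζ hζ)) (hre _ hw₀))
  have h0 : h 0 = 0 := by
    simp [hh, cay_zero]
  have hζmem : Complex.abs ((w - w₀) / (w + (starRingEnd ℂ) w₀)) < 1 :=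
    abs_hp_quot_lt_one hw hw₀
  have hS := Complex.abs_le_abs_of_mapsTo_ball_self hdiff hmapsh h0 hζmem
  have hval : h ((w - w₀) / (w + (starRingEnd ℂ) w₀))
      = (Θ w - Θ w₀) / (Θ w + (starRingEnd ℂ) (Θ w₀)) := by
    rw [hh]; simp only; rw [cay_eval hw hw₀]
  rw [hval] at hS
  have d1 : 0 < Complex.abs (Θ w + (starRingEnd ℂ) (Θ w₀)) := by
    have : Θ w + (starRingEnd ℂ) (Θ w₀) ≠ 0 := by
      intro hc
      have h2 : (Θ w + (starRingEnd ℂ) (Θ w₀)).re = 0 := by rw [hc]; simp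
      simp only [add_re, conj_re] at h2
      have := hre _ hw
      have := hre _ hw₀
      linarith
    simpa [Complex.abs.pos_iff] using this
  have d2 : 0 < Complex.abs (w + (starRingEnd ℂ) w₀) := by
    have : w + (starRingEnd ℂ) w₀ ≠ 0 := by
      intro hc
      have h2 : (w + (starRingEnd ℂ) w₀).re = 0 := by rw [hc]; simp
      simp only [add_re, conj_re] at h2
      linarith
    simpa [Complex.abs.pos_iff] using this
  rw [map_div₀, map_div₀, div_le_div_iff₀ d1 d2] at hS
  linarith

set_option maxHeartbeats 1000000 in
/-- Main half-plane estimate: if `Re Θ ≥ 0` on the right half-plane then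
`|Θ w - i Im Θ w₀| ≤ Re Θ w₀ (|w|+|w₀|)² / (Re w Re w₀)`. -/
lemma hp_estimate {Θ : ℂ → ℂ} (hΘ : DifferentiableOn ℂ Θ {w : ℂ | 0 < w.re})
    (hre : ∀ w, 0 < w.re → 0 ≤ (Θ w).re) {w w₀ : ℂ} (hw : 0 < w.re) (hw₀ : 0 < w₀.re) :
    Complex.abs (Θ w - ((Θ w₀).im : ℂ) * I) * (w.re * w₀.re)
      ≤ (Θ w₀).re * (Complex.abs w + Complex.abs w₀) ^ 2 := by
  set D := Complex.abs (w + (starRingEnd ℂ) w₀) with hD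
  set N := Complex.abs (w - w₀) with hN
  have hDN : D ^ 2 - N ^ 2 = 4 * (w.re * w₀.re) := by
    rw [hD, hN, Complex.sq_abs, Complex.sq_abs]
    exact normSq_add_conj w w₀
  have hDb : D ≤ Complex.abs w + Complex.abs w₀ := by
    refine le_trans (Complex.abs.add_le _ _) ?_
    simp [Complex.abs_conj]
  have hNb : N ≤ Complex.abs w + Complex.abs w₀ := Complex.abs.sub_le_add _ _
  have hN0 : 0 ≤ N := Complex.abs.nonneg _
  have hD0 : 0 ≤ D := Complex.abs.nonneg _
  have key : ∀ δ : ℝ, 0 < δ →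
      Complex.abs (Θ w - ((Θ w₀).im : ℂ) * I) * (w.re * w₀.re)
        ≤ ((Θ w₀).re + δ) * (Complex.abs w + Complex.abs w₀) ^ 2 + δ * (w.re * w₀.re) := by
    intro δ hδ
    set Θδ : ℂ → ℂ := fun u => Θ u + (δ : ℂ) with hΘδ
    have hΘδd : DifferentiableOn ℂ Θδ {w : ℂ | 0 < w.re} :=
      hΘ.add (differentiableOn_const _)
    have hΘδre : ∀ u, 0 < u.re → 0 < (Θδ u).re := by
      intro u hu
      have := hre u hu
      simp only [hΘδ, add_re, Complex.ofReal_re]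
      linarith
    have hSP := hp_schwarz_pick hΘδd hΘδre hw hw₀
    set u : ℂ := Θ w + (δ : ℂ) - ((Θ w₀).im : ℂ) * I with hu
    set x₀ : ℝ := (Θ w₀).re + δ with hx₀
    have hx₀pos : 0 < x₀ := by have := hre w₀ hw₀; simp only [hx₀]; linarith
    have e1 : Θδ w - Θδ w₀ = u - (x₀ : ℂ) := by
      simp only [hΘδ, hu, hx₀]
      apply Complex.ext <;>
        simp [Complex.add_re, Complex.add_im, Complex.sub_re, Complex.sub_im,
          Complex.mul_re, Complex.mul_im]
    have e2 : Θδ w + (starRingEnd ℂ) (Θδ w₀) = u + (x₀ : ℂ) := by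
      have hconj : (starRingEnd ℂ) (Θ w₀ + (δ:ℂ))
          = ((Θ w₀).re : ℂ) + (δ:ℂ) - ((Θ w₀).im:ℂ) * I := by
        apply Complex.ext <;> simp
      simp only [hΘδ]
      rw [hconj, hu, hx₀]
      push_cast
      ring
    rw [e1, e2] at hSP
    have t1 : Complex.abs u ≤ Complex.abs (u - (x₀:ℂ)) + x₀ := by
      have := Complex.abs.add_le (u - (x₀:ℂ)) ((x₀:ℂ))
      simpa [Complex.abs_ofReal, abs_of_pos hx₀pos] using this
    have t2 : Complex.abs (u + (x₀:ℂ)) ≤ Complex.abs u + x₀ := by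
      have := Complex.abs.add_le u ((x₀:ℂ))
      simpa [Complex.abs_ofReal, abs_of_pos hx₀pos] using this
    have t3 : Complex.abs (Θ w - ((Θ w₀).im : ℂ) * I) ≤ Complex.abs u + δ := by
      have h4 : Θ w - ((Θ w₀).im : ℂ) * I = u - (δ:ℂ) := by rw [hu]; ring
      rw [h4]
      have := Complex.abs.sub_le_add u ((δ:ℂ))
      simpa [Complex.abs_ofReal, abs_of_pos hδ] using this
    set au := Complex.abs u with hau
    have hau0 : 0 ≤ au := Complex.abs.nonneg _
    have h5 : au * (D - N) ≤ x₀ * (D + N) := by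
      nlinarith [Complex.abs.nonneg (u - (x₀:ℂ)), Complex.abs.nonneg (u + (x₀:ℂ))]
    have hDNpos : (0:ℝ) ≤ D + N := by linarith
    have h6' : au * (D - N) * (D + N) ≤ x₀ * (D + N) * (D + N) :=
      mul_le_mul_of_nonneg_right h5 hDNpos
    have h6 : au * (4 * (w.re * w₀.re)) ≤ x₀ * ((D + N) * (D + N)) := by
      calc au * (4 * (w.re * w₀.re)) = au * (D - N) * (D + N) := by
            rw [← hDN]; ring
        _ ≤ x₀ * (D + N) * (D + N) := h6'
        _ = x₀ * ((D + N) * (D + N)) := by ring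
    have h7 : (D + N) * (D + N) ≤ (2 * (Complex.abs w + Complex.abs w₀))
        * (2 * (Complex.abs w + Complex.abs w₀)) :=
      mul_self_le_mul_self (by linarith) (by linarith)
    have h7' : x₀ * ((D + N) * (D + N)) ≤ x₀ * ((2 * (Complex.abs w + Complex.abs w₀))
        * (2 * (Complex.abs w + Complex.abs w₀))) :=
      mul_le_mul_of_nonneg_left h7 hx₀pos.le
    have h8 : au * (w.re * w₀.re) ≤ x₀ * (Complex.abs w + Complex.abs w₀) ^ 2 := by
      nlinarith [h6, h7']
    nlinarith [t3, mul_pos hw hw₀]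
  refine le_of_forall_pos_le_add ?_
  intro ε hε
  set K : ℝ := (Complex.abs w + Complex.abs w₀) ^ 2 + w.re * w₀.re with hK
  have hK0 : 0 < K := by
    have := mul_pos hw hw₀
    positivity
  have := key (ε / K) (by positivity)
  calc Complex.abs (Θ w - ((Θ w₀).im : ℂ) * I) * (w.re * w₀.re)
      ≤ ((Θ w₀).re + ε / K) * (Complex.abs w + Complex.abs w₀) ^ 2
          + (ε / K) * (w.re * w₀.re) := this
    _ = (Θ w₀).re * (Complex.abs w + Complex.abs w₀) ^ 2 + (ε / K) * K := by rw [hK]; ring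
    _ = (Θ w₀).re * (Complex.abs w + Complex.abs w₀) ^ 2 + ε := by
        rw [div_mul_cancel₀ _ hK0.ne']

/-- smallness of `Θ` on sectors, given that `inf Re Θ / Re w = 0`. -/
lemma hp_small_on_sector {Θ : ℂ → ℂ} (hΘ : DifferentiableOn ℂ Θ {w : ℂ | 0 < w.re})
    (hre : ∀ w, 0 < w.re → 0 ≤ (Θ w).re)
    (hinf : ∀ ε > (0:ℝ), ∃ w₀, 0 < w₀.re ∧ (Θ w₀).re < ε * w₀.re)
    {c : ℝ} (hc : 0 < c) {ε : ℝ} (hε : 0 < ε) :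
    ∃ R : ℝ, ∀ w, 0 < w.re → c * Complex.abs w ≤ w.re → R ≤ Complex.abs w →
      Complex.abs (Θ w) ≤ ε * Complex.abs w := by
  obtain ⟨w₀, hw₀, hsm⟩ := hinf (ε * c / 8) (by positivity)
  set y₀ := (Θ w₀).im with hy₀
  refine ⟨max (Complex.abs w₀) (2 * |y₀| / ε), ?_⟩
  intro w hw hsec hR
  have haw : 0 < Complex.abs w := lt_of_lt_of_le hw (by
    calc w.re ≤ Complex.abs w := Complex.re_le_abs w
      _ = Complex.abs w := rfl)
  have haw₀ : Complex.abs w₀ ≤ Complex.abs w := le_trans (le_max_left _ _) hR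
  have hy : 2 * |y₀| / ε ≤ Complex.abs w := le_trans (le_max_right _ _) hR
  have est := hp_estimate hΘ hre hw hw₀
  have hre₀ := hre w₀ hw₀
  -- (|w| + |w₀|)² ≤ 4 |w|²
  have hsq : (Complex.abs w + Complex.abs w₀) ^ 2 ≤ 4 * Complex.abs w ^ 2 := by
    nlinarith [Complex.abs.nonneg w₀]
  have est2 : Complex.abs (Θ w - (y₀ : ℂ) * I) * (w.re * w₀.re)
      ≤ (ε * c / 8) * w₀.re * (4 * Complex.abs w ^ 2) := by
    calc Complex.abs (Θ w - (y₀ : ℂ) * I) * (w.re * w₀.re)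
        ≤ (Θ w₀).re * (Complex.abs w + Complex.abs w₀) ^ 2 := est
      _ ≤ (ε * c / 8) * w₀.re * (4 * Complex.abs w ^ 2) := by nlinarith
  have habs1 : Complex.abs (Θ w - (y₀ : ℂ) * I) ≤ (ε / 2) * Complex.abs w := by
    have h1 : Complex.abs (Θ w - (y₀ : ℂ) * I) * (c * Complex.abs w * w₀.re)
        ≤ (ε * c / 2) * w₀.re * Complex.abs w ^ 2 := by
      nlinarith [est2, hsec, hw₀.le,
        mul_nonneg (Complex.abs.nonneg (Θ w - (y₀ : ℂ) * I)) hw₀.le]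
    have h2 : 0 < c * Complex.abs w * w₀.re := by positivity
    nlinarith [Complex.abs.nonneg (Θ w - (y₀ : ℂ) * I)]
  have hy2 : |y₀| ≤ (ε / 2) * Complex.abs w := by
    rw [div_le_iff₀ hε] at hy
    nlinarith
  calc Complex.abs (Θ w) = Complex.abs ((Θ w - (y₀:ℂ) * I) + (y₀:ℂ) * I) := by
        rw [sub_add_cancel]
    _ ≤ Complex.abs (Θ w - (y₀:ℂ) * I) + Complex.abs ((y₀:ℂ) * I) := Complex.abs.add_le _ _
    _ = Complex.abs (Θ w - (y₀:ℂ) * I) + |y₀| := by simp [Complex.abs_ofReal, Complex.abs_I]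
    _ ≤ ε * Complex.abs w := by linarith

noncomputable def Wmap (σ z : ℂ) : ℂ := (σ + z) / (σ - z)
noncomputable def Zmap (σ w : ℂ) : ℂ := σ * (w - 1) / (w + 1)

lemma normSq_sigma {σ : ℂ} (hσ : Complex.abs σ = 1) : normSq σ = 1 := by
  rw [← Complex.sq_abs, hσ]; norm_num

lemma sigma_sub_ne {σ z : ℂ} (hσ : Complex.abs σ = 1) (hz : Complex.abs z < 1) :
    σ - z ≠ 0 := by
  intro h
  have : σ = z := by linear_combination h
  rw [← this] at hz; rw [hσ] at hz; linarith

lemma re_add_one_ne {w : ℂ} (hw : 0 < w.re) : w + 1 ≠ 0 := by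
  intro h
  have : (w + 1).re = 0 := by rw [h]; simp
  simp only [add_re, one_re] at this
  linarith

lemma abs_Zmap {σ w : ℂ} (hσ : Complex.abs σ = 1) (hw : 0 < w.re) :
    Complex.abs (Zmap σ w) < 1 := by
  have h1 : w + 1 ≠ 0 := re_add_one_ne hw
  have h2 : 0 < Complex.abs (w + 1) := by simpa [Complex.abs.pos_iff] using h1
  rw [Zmap, map_div₀, map_mul, hσ, one_mul, div_lt_one h2]
  refine abs_lt_abs_of_normSq_lt ?_
  have h3 := normSq_add_conj w 1
  simp only [map_one, Complex.one_re, mul_one] at h3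
  nlinarith

lemma Wmap_Zmap {σ w : ℂ} (hσ : Complex.abs σ = 1) (hw : 0 < w.re) :
    Wmap σ (Zmap σ w) = w := by
  have h1 : w + 1 ≠ 0 := re_add_one_ne hw
  have hσ0 : σ ≠ 0 := by
    intro h; rw [h] at hσ; simp at hσ
  have h2 : σ + Zmap σ w = σ * (2 * w) / (w + 1) := by
    rw [Zmap]; field_simp; ring
  have h3 : σ - Zmap σ w = σ * 2 / (w + 1) := by
    rw [Zmap]; field_simp; ring
  rw [Wmap, h2, h3]
  field_simp

lemma Zmap_Wmap {σ z : ℂ} (hσ : Complex.abs σ = 1) (hz : Complex.abs z < 1) :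
    Zmap σ (Wmap σ z) = z := by
  have h1 : σ - z ≠ 0 := sigma_sub_ne hσ hz
  have hσ0 : σ ≠ 0 := by intro h; rw [h] at hσ; simp at hσ
  have h2 : Wmap σ z - 1 = 2 * z / (σ - z) := by
    rw [Wmap]; field_simp; ring
  have h3 : Wmap σ z + 1 = 2 * σ / (σ - z) := by
    rw [Wmap]; field_simp; ring
  rw [Zmap, h2, h3]
  field_simp

lemma re_Wmap {σ z : ℂ} (hσ : Complex.abs σ = 1) :
    (Wmap σ z).re = (1 - normSq z) / normSq (σ - z) := by
  rw [Wmap, re_div_eq]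
  have h1 : ((σ + z) * (starRingEnd ℂ) (σ - z)).re = normSq σ - normSq z := by
    simp only [map_sub, normSq_apply, mul_re, mul_im, add_re, add_im, sub_re, sub_im,
      conj_re, conj_im]
    ring
  rw [h1, normSq_sigma hσ]

lemma re_Wmap_pos {σ z : ℂ} (hσ : Complex.abs σ = 1) (hz : Complex.abs z < 1) :
    0 < (Wmap σ z).re := by
  rw [re_Wmap hσ]
  have h1 : 0 < normSq (σ - z) := normSq_pos.2 (sigma_sub_ne hσ hz)
  have h2 := normSq_lt_one hz
  have h3 : 0 < 1 - normSq z := by linarith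
  positivity

lemma Zmap_differentiableOn (σ : ℂ) : DifferentiableOn ℂ (Zmap σ) {w : ℂ | 0 < w.re} := by
  apply DifferentiableOn.div
  · exact (differentiableOn_const _).mul (differentiableOn_id.sub (differentiableOn_const _))
  · exact differentiableOn_id.add (differentiableOn_const _)
  · exact fun w hw => re_add_one_ne hw

end JWCaux

/-- The Stolz region `S(σ, M) = {z ∈ 𝔻 : |σ - z| < M(1-|z|)}`. -/
def stolz (σ : ℂ) (M : ℝ) : Set ℂ :=
  {z ∈ Metric.ball (0:ℂ) 1 | ‖σ - z‖ < M * (1 - ‖z‖)}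

namespace JWCaux

lemma main_B {g : ℂ → ℂ} {σ : ℂ} (hσ : Complex.abs σ = 1)
    (hg : DifferentiableOn ℂ g (Metric.ball (0:ℂ) 1))
    (hmaps : Set.MapsTo g (Metric.ball (0:ℂ) 1) (Metric.ball (0:ℂ) 1))
    {a : ℝ} (ha : 0 < a)
    (julia : ∀ z : ℂ, Complex.abs z < 1 →
      (1 - normSq z) * normSq (σ - g z) ≤ a * ((1 - normSq (g z)) * normSq (σ - z))) :
    ∃ b : ℝ, 0 < b ∧ b ≤ a ∧ ∀ M > (1:ℝ),
      Tendsto (fun z => (σ - g z) / (σ - z)) (nhdsWithin σ (stolz σ M)) (nhds (b : ℂ)) := by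
  have hσ0 : σ ≠ 0 := by intro h; rw [h] at hσ; simp at hσ
  set Φ : ℂ → ℂ := fun w => Wmap σ (g (Zmap σ w)) with hΦ
  have hgZ : ∀ w : ℂ, 0 < w.re → Complex.abs (g (Zmap σ w)) < 1 := fun w hw =>
    mem_ball_iff_abs.1 (hmaps (mem_ball_iff_abs.2 (abs_Zmap hσ hw)))
  have hΦdiff : DifferentiableOn ℂ Φ {w : ℂ | 0 < w.re} := by
    have h1 : DifferentiableOn ℂ (fun w => g (Zmap σ w)) {w : ℂ | 0 < w.re} :=
      hg.comp (Zmap_differentiableOn σ) (fun w hw => mem_ball_iff_abs.2 (abs_Zmap hσ hw))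
    apply DifferentiableOn.div ((differentiableOn_const σ).add h1)
      ((differentiableOn_const σ).sub h1)
    exact fun w hw => sigma_sub_ne hσ (hgZ w hw)
  set S : Set ℝ := (fun w => (Φ w).re / w.re) '' {w : ℂ | 0 < w.re} with hSdef
  have hSne : S.Nonempty := ⟨_, ⟨1, by norm_num [Complex.one_re], rfl⟩⟩
  have hSlb : ∀ x ∈ S, 1/a ≤ x := by
    rintro x ⟨w, hw, rfl⟩
    simp only [Set.mem_setOf_eq] at hw
    show 1/a ≤ (Φ w).re / w.re
    have hz : Complex.abs (Zmap σ w) < 1 := abs_Zmap hσ hw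
    have hgz : Complex.abs (g (Zmap σ w)) < 1 := hgZ w hw
    have hP : 0 < 1 - normSq (g (Zmap σ w)) := by linarith [normSq_lt_one hgz]
    have hQ : 0 < normSq (σ - g (Zmap σ w)) := normSq_pos.2 (sigma_sub_ne hσ hgz)
    have hR : 0 < 1 - normSq (Zmap σ w) := by linarith [normSq_lt_one hz]
    have hT : 0 < normSq (σ - Zmap σ w) := normSq_pos.2 (sigma_sub_ne hσ hz)
    have hre1 : (Φ w).re
        = (1 - normSq (g (Zmap σ w))) / normSq (σ - g (Zmap σ w)) := by
      simp only [hΦ]; exact re_Wmap hσ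
    have hre2 : w.re = (1 - normSq (Zmap σ w)) / normSq (σ - Zmap σ w) := by
      conv_lhs => rw [← Wmap_Zmap hσ hw]
      exact re_Wmap hσ
    have hj := julia (Zmap σ w) hz
    rw [hre1, hre2]
    rw [div_div_div_eq]
    rw [div_le_div_iff₀ ha (by positivity)]
    nlinarith [hj]
  have hbdd : BddBelow S := ⟨1/a, hSlb⟩
  set β := sInf S with hβdef
  have hβlb : 1/a ≤ β := le_csInf hSne hSlb
  have hβpos : 0 < β := lt_of_lt_of_le (by positivity) hβlb
  have hβle : ∀ w : ℂ, 0 < w.re → β * w.re ≤ (Φ w).re := by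
    intro w hw
    have h1 : β ≤ (Φ w).re / w.re := csInf_le hbdd ⟨w, hw, rfl⟩
    rw [le_div_iff₀ hw] at h1
    exact h1
  set Θ : ℂ → ℂ := fun w => Φ w - (β:ℂ) * w with hΘ
  have hΘre : ∀ w : ℂ, 0 < w.re → 0 ≤ (Θ w).re := by
    intro w hw
    simp only [hΘ, Complex.sub_re, Complex.re_ofReal_mul]
    linarith [hβle w hw]
  have hΘdiff : DifferentiableOn ℂ Θ {w : ℂ | 0 < w.re} :=
    hΦdiff.sub ((differentiableOn_const _).mul differentiableOn_id)
  have hΘinf : ∀ ε > (0:ℝ), ∃ w₀ : ℂ, 0 < w₀.re ∧ (Θ w₀).re < ε * w₀.re := by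
    intro ε hε
    obtain ⟨x, hxS, hxlt⟩ := exists_lt_of_csInf_lt hSne
      (show sInf S < β + ε by rw [← hβdef]; linarith)
    obtain ⟨w₀, hw₀, rfl⟩ := hxS
    simp only [Set.mem_setOf_eq] at hw₀
    refine ⟨w₀, hw₀, ?_⟩
    rw [div_lt_iff₀ hw₀] at hxlt
    simp only [hΘ, Complex.sub_re, Complex.re_ofReal_mul]
    nlinarith [hxlt]
  refine ⟨1/β, by positivity, ?_, ?_⟩
  · rw [div_le_iff₀ hβpos]
    calc (1:ℝ) = a * (1/a) := by field_simp
      _ ≤ a * β := mul_le_mul_of_nonneg_left hβlb ha.le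
  intro M hM
  have hM0 : 0 < M := lt_trans one_pos hM
  set l := nhdsWithin σ (stolz σ M) with hl
  -- pointwise geometric facts on the Stolz region
  have key : ∀ z ∈ stolz σ M, Complex.abs z < 1 ∧ 0 < Complex.abs (σ - z) ∧
      1 / (M * Complex.abs (σ - z)) ≤ (Wmap σ z).re ∧
      (1/(2*M)) * Complex.abs (Wmap σ z) ≤ (Wmap σ z).re := by
    intro z hz
    obtain ⟨hzb, hz2⟩ := hz
    have hz1 : Complex.abs z < 1 := mem_ball_iff_abs.1 hzb
    have habs : 0 < Complex.abs (σ - z) := by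
      simpa [Complex.abs.pos_iff] using sigma_sub_ne hσ hz1
    have h1z : 0 < 1 - Complex.abs z := by linarith
    have hreW : (Wmap σ z).re = (1 - normSq z) / normSq (σ - z) := re_Wmap hσ
    have hnsq : normSq (σ - z) = Complex.abs (σ - z) ^ 2 := (Complex.sq_abs _).symm
    have hns1 : 1 - Complex.abs z ≤ 1 - normSq z := by
      have h := Complex.sq_abs z
      nlinarith [Complex.abs.nonneg z]
    have h3 : 1 / (M * Complex.abs (σ - z)) ≤ (Wmap σ z).re := by
      rw [hreW, hnsq, div_le_div_iff₀ (by positivity) (by positivity)]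
      have p1 : Complex.abs (σ - z) * Complex.abs (σ - z)
          < (M * (1 - Complex.abs z)) * Complex.abs (σ - z) :=
        mul_lt_mul_of_pos_right hz2 habs
      have p2 : (1 - Complex.abs z) * (M * Complex.abs (σ - z))
          ≤ (1 - normSq z) * (M * Complex.abs (σ - z)) :=
        mul_le_mul_of_nonneg_right hns1 (by positivity)
      nlinarith [p1, p2]
    refine ⟨hz1, habs, h3, ?_⟩
    have hWabs : Complex.abs (Wmap σ z) ≤ 2 / Complex.abs (σ - z) := by
      rw [Wmap, map_div₀]
      have hnum : Complex.abs (σ + z) ≤ 2 := by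
        calc Complex.abs (σ + z) ≤ Complex.abs σ + Complex.abs z := Complex.abs.add_le _ _
          _ ≤ 2 := by rw [hσ]; linarith
      gcongr
    calc (1/(2*M)) * Complex.abs (Wmap σ z)
        ≤ (1/(2*M)) * (2 / Complex.abs (σ - z)) := by gcongr
      _ = 1 / (M * Complex.abs (σ - z)) := by field_simp
      _ ≤ (Wmap σ z).re := h3
  have hev : ∀ᶠ z in l, z ∈ stolz σ M := eventually_mem_nhdsWithin
  -- |σ - z| → 0
  have hS1 : Tendsto (fun z : ℂ => Complex.abs (σ - z)) l (nhds 0) := by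
    have h1 : Tendsto (fun z : ℂ => Complex.abs (σ - z)) (nhds σ)
        (nhds (Complex.abs (σ - σ))) :=
      (Complex.continuous_abs.comp (continuous_const.sub continuous_id)).tendsto σ
    simp only [sub_self, map_zero] at h1
    exact h1.mono_left nhdsWithin_le_nhds
  -- |W z| → ∞
  have hT : Tendsto (fun z : ℂ => M * Complex.abs (σ - z)) l (nhdsWithin 0 (Set.Ioi 0)) := by
    rw [tendsto_nhdsWithin_iff]
    constructor
    · simpa using hS1.const_mul M
    · filter_upwards [hev] with z hz
      have := (key z hz).2.1
      have : 0 < M * Complex.abs (σ - z) := by positivity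
      exact this
  have hWatTop : Tendsto (fun z : ℂ => Complex.abs (Wmap σ z)) l atTop := by
    refine tendsto_atTop_mono' l ?_ (tendsto_inv_nhdsGT_zero.comp hT)
    filter_upwards [hev] with z hz
    obtain ⟨hz1, habs, h3, _⟩ := key z hz
    calc (fun x : ℝ => x⁻¹) ((fun z : ℂ => M * Complex.abs (σ - z)) z)
        = 1 / (M * Complex.abs (σ - z)) := by simp [one_div]
      _ ≤ (Wmap σ z).re := h3
      _ ≤ Complex.abs (Wmap σ z) := Complex.re_le_abs _
  -- Θ (W z) / W z → 0
  have hS3 : Tendsto (fun z : ℂ => Θ (Wmap σ z) / Wmap σ z) l (nhds 0) := by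
    rw [NormedAddCommGroup.tendsto_nhds_zero]
    intro ε hε
    obtain ⟨R, hR⟩ := hp_small_on_sector hΘdiff hΘre hΘinf
      (c := 1/(2*M)) (by positivity) (ε := ε/2) (by linarith)
    filter_upwards [hev, hWatTop.eventually_ge_atTop R] with z hz hzR
    obtain ⟨hz1, habs, h3, h4⟩ := key z hz
    have hWre : 0 < (Wmap σ z).re := re_Wmap_pos hσ hz1
    have hWabs : 0 < Complex.abs (Wmap σ z) := lt_of_lt_of_le hWre (Complex.re_le_abs _)
    have hb := hR (Wmap σ z) hWre h4 hzR
    have : ‖Θ (Wmap σ z) / Wmap σ z‖ = Complex.abs (Θ (Wmap σ z)) / Complex.abs (Wmap σ z) := by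
      simp [Complex.norm_eq_abs, map_div₀]
    rw [this, div_lt_iff₀ hWabs]
    calc Complex.abs (Θ (Wmap σ z)) ≤ ε/2 * Complex.abs (Wmap σ z) := hb
      _ < ε * Complex.abs (Wmap σ z) := by nlinarith
  -- (W z)⁻¹ → 0
  have hS4 : Tendsto (fun z : ℂ => (Wmap σ z)⁻¹) l (nhds 0) := by
    rw [tendsto_zero_iff_norm_tendsto_zero]
    have h1 := tendsto_inv_atTop_zero.comp hWatTop
    refine h1.congr ?_
    intro z
    simp [Complex.norm_eq_abs, map_inv₀]
  have hβC : ((β:ℝ):ℂ) ≠ 0 := Complex.ofReal_ne_zero.2 hβpos.ne'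
  have hden : Tendsto (fun z : ℂ => (β:ℂ) + Θ (Wmap σ z) / Wmap σ z + (Wmap σ z)⁻¹) l
      (nhds ((β:ℂ) + 0 + 0)) := (tendsto_const_nhds.add hS3).add hS4
  have hnum : Tendsto (fun z : ℂ => 1 + (Wmap σ z)⁻¹) l (nhds (1 + 0)) :=
    tendsto_const_nhds.add hS4
  have hquot := hnum.div hden (by simpa using hβC)
  have hlimeq : ((1:ℂ) + 0) / ((β:ℂ) + 0 + 0) = ((1/β : ℝ) : ℂ) := by
    push_cast; simp
  rw [hlimeq] at hquot
  refine Tendsto.congr' ?_ hquot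
  filter_upwards [hev] with z hz
  obtain ⟨hz1, habs, h3, h4⟩ := key z hz
  have hWre : 0 < (Wmap σ z).re := re_Wmap_pos hσ hz1
  have hWne : Wmap σ z ≠ 0 := by
    intro h; rw [h] at hWre; simp at hWre
  have hgz : Complex.abs (g z) < 1 := mem_ball_iff_abs.1 (hmaps (mem_ball_iff_abs.2 hz1))
  have hσz : σ - z ≠ 0 := sigma_sub_ne hσ hz1
  have hσgz : σ - g z ≠ 0 := sigma_sub_ne hσ hgz
  have hZW : Zmap σ (Wmap σ z) = z := Zmap_Wmap hσ hz1
  have hΦW : Φ (Wmap σ z) = (σ + g z) / (σ - g z) := by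
    simp only [hΦ]
    rw [hZW, Wmap]
  have hq1 : (σ + g z) / (σ - g z) + 1 = 2*σ/(σ - g z) := by field_simp; ring
  have hW1 : Wmap σ z + 1 = 2*σ/(σ - z) := by rw [Wmap]; field_simp; ring
  have hq1ne : (σ + g z) / (σ - g z) + 1 ≠ 0 := by
    rw [hq1]
    exact div_ne_zero (by simpa using hσ0) hσgz
  have hdenval : (β:ℂ) + Θ (Wmap σ z) / Wmap σ z + (Wmap σ z)⁻¹
      = ((σ + g z) / (σ - g z) + 1) / Wmap σ z := by
    simp only [hΘ, hΦW]
    field_simp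
    ring
  have hnumval : (1:ℂ) + (Wmap σ z)⁻¹ = (Wmap σ z + 1) / Wmap σ z := by
    field_simp
  simp only [Pi.div_apply]
  rw [hdenval, hnumval, hW1, hq1, div_div_div_eq]
  rw [div_eq_div_iff (by
    apply mul_ne_zero hWne
    apply div_ne_zero _ hσgz
    · intro h
      apply hσ0
      have : (2:ℂ) ≠ 0 := two_ne_zero
      simpa using h) hσz]
  field_simp

lemma radial_tendsto {σ : ℂ} (hσ : Complex.abs σ = 1) {M : ℝ} (hM : 1 < M) :
    Tendsto (fun r : ℝ => (r:ℂ) * σ) (nhdsWithin 1 (Set.Iio 1)) (nhdsWithin σ (stolz σ M)) := by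
  rw [tendsto_nhdsWithin_iff]
  constructor
  · have h : Tendsto (fun r : ℝ => (r:ℂ) * σ) (nhds 1) (nhds (((1:ℝ):ℂ) * σ)) :=
      (Complex.continuous_ofReal.mul continuous_const).tendsto 1
    simp only [Complex.ofReal_one, one_mul] at h
    exact h.mono_left nhdsWithin_le_nhds
  · have h1 : ∀ᶠ r : ℝ in nhdsWithin 1 (Set.Iio 1), 0 < r :=
      (eventually_gt_nhds one_pos).filter_mono nhdsWithin_le_nhds
    filter_upwards [h1, eventually_mem_nhdsWithin] with r hr0 hr1
    have hr1' : r < 1 := hr1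
    have habs : Complex.abs ((r:ℂ) * σ) = r := by
      rw [map_mul, hσ, mul_one, Complex.abs_ofReal, abs_of_pos hr0]
    constructor
    · rw [mem_ball_iff_abs, habs]; exact hr1'
    · have hdiff : σ - (r:ℂ) * σ = ((1 - r : ℝ) : ℂ) * σ := by push_cast; ring
      change Complex.abs (σ - (r:ℂ) * σ) < M * (1 - Complex.abs ((r:ℂ) * σ))
      rw [hdiff, map_mul, hσ, mul_one, Complex.abs_ofReal, abs_of_pos (by linarith), habs]
      nlinarith
lemma radial_tendsto_ball {σ : ℂ} (hσ : Complex.abs σ = 1) :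
    Tendsto (fun r : ℝ => (r:ℂ) * σ) (nhdsWithin 1 (Set.Iio 1))
      (nhdsWithin σ (Metric.ball (0:ℂ) 1)) :=
  (radial_tendsto hσ one_lt_two).mono_right (nhdsWithin_mono σ (Set.sep_subset _ _))

lemma liminf_le_radial {g : ℂ → ℂ} {σ : ℂ} (hσ : Complex.abs σ = 1) {L : ℂ}
    (h : Tendsto (fun z => (σ - g z) / (σ - z)) (nhdsWithin σ (stolz σ 2)) (nhds L)) :
    liminf (fun z : ℂ => (((1 - Complex.abs (g z)) / (1 - Complex.abs z) : ℝ) : EReal))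
      (nhdsWithin σ (Metric.ball (0:ℂ) 1)) ≤ ((Complex.abs L : ℝ) : EReal) := by
  set rf := Filter.map (fun r : ℝ => (r:ℂ) * σ) (nhdsWithin (1:ℝ) (Set.Iio 1)) with hrf
  have hne : rf.NeBot := Filter.map_neBot
  have hrb : rf ≤ nhdsWithin σ (Metric.ball (0:ℂ) 1) := radial_tendsto_ball hσ
  have hrs : rf ≤ nhdsWithin σ (stolz σ 2) := radial_tendsto hσ one_lt_two
  have h1 : liminf (fun z : ℂ => (((1 - Complex.abs (g z)) / (1 - Complex.abs z) : ℝ) : EReal))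
      (nhdsWithin σ (Metric.ball (0:ℂ) 1))
      ≤ liminf (fun z : ℂ => (((1 - Complex.abs (g z)) / (1 - Complex.abs z) : ℝ) : EReal)) rf :=
    liminf_le_liminf_of_le hrb
  refine le_trans h1 ?_
  have hF : Tendsto (fun z => Complex.abs ((σ - g z) / (σ - z))) rf (nhds (Complex.abs L)) :=
    (Complex.continuous_abs.tendsto L).comp (h.mono_left hrs)
  have hFE : Tendsto (fun z => ((Complex.abs ((σ - g z) / (σ - z)) : ℝ) : EReal)) rf
      (nhds ((Complex.abs L : ℝ) : EReal)) := EReal.tendsto_coe.2 hF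
  have h2 : liminf (fun z : ℂ => ((Complex.abs ((σ - g z) / (σ - z)) : ℝ) : EReal)) rf
      = ((Complex.abs L : ℝ) : EReal) := hFE.liminf_eq
  rw [← h2]
  have hbd : ∀ᶠ z in rf, (((1 - Complex.abs (g z)) / (1 - Complex.abs z) : ℝ) : EReal)
      ≤ ((Complex.abs ((σ - g z) / (σ - z)) : ℝ) : EReal) := by
    rw [hrf, Filter.eventually_map]
    have h1' : ∀ᶠ r : ℝ in nhdsWithin 1 (Set.Iio 1), 0 < r :=
      (eventually_gt_nhds one_pos).filter_mono nhdsWithin_le_nhds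
    filter_upwards [h1', eventually_mem_nhdsWithin] with r hr0 hr1
    have hr1' : (r:ℝ) < 1 := hr1
    have habs : Complex.abs ((r:ℂ) * σ) = r := by
      rw [map_mul, hσ, mul_one, Complex.abs_ofReal, abs_of_pos hr0]
    have hdiff : σ - (r:ℂ) * σ = ((1 - r : ℝ) : ℂ) * σ := by push_cast; ring
    have habs2 : Complex.abs (σ - (r:ℂ) * σ) = 1 - r := by
      rw [hdiff, map_mul, hσ, mul_one, Complex.abs_ofReal, abs_of_pos (by linarith)]
    rw [EReal.coe_le_coe_iff, map_div₀, habs, habs2]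
    have h1r : (0:ℝ) < 1 - r := by linarith
    have hnum : 1 - Complex.abs (g ((r:ℂ) * σ)) ≤ Complex.abs (σ - g ((r:ℂ) * σ)) := by
      have := norm_sub_norm_le σ (g ((r:ℂ) * σ))
      simp only [Complex.norm_eq_abs, hσ] at this
      exact this
    rw [div_le_div_iff₀ h1r h1r]
    nlinarith [hnum]
  exact liminf_le_liminf hbd

set_option maxHeartbeats 1000000 in
lemma julia_lemma {g : ℂ → ℂ} {σ : ℂ} (hσ : Complex.abs σ = 1)
    (hg : DifferentiableOn ℂ g (Metric.ball (0:ℂ) 1))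
    (hmaps : Set.MapsTo g (Metric.ball (0:ℂ) 1) (Metric.ball (0:ℂ) 1))
    (hlim2 : Tendsto g (nhdsWithin σ (stolz σ 2)) (nhds σ))
    (hfin : liminf (fun z : ℂ => (((1 - Complex.abs (g z)) / (1 - Complex.abs z) : ℝ) : EReal))
      (nhdsWithin σ (Metric.ball (0:ℂ) 1)) < ⊤) :
    0 < (liminf (fun z : ℂ => (((1 - Complex.abs (g z)) / (1 - Complex.abs z) : ℝ) : EReal))
      (nhdsWithin σ (Metric.ball (0:ℂ) 1))).toReal ∧
    ∀ z : ℂ, Complex.abs z < 1 →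
      (1 - normSq z) * normSq (σ - g z)
        ≤ (liminf (fun z : ℂ => (((1 - Complex.abs (g z)) / (1 - Complex.abs z) : ℝ) : EReal))
            (nhdsWithin σ (Metric.ball (0:ℂ) 1))).toReal
          * ((1 - normSq (g z)) * normSq (σ - z)) := by
  have hσ0 : σ ≠ 0 := by intro h; rw [h] at hσ; simp at hσ
  have hσσ : (starRingEnd ℂ) σ * σ = 1 := by
    have h := Complex.mul_conj σ
    rw [normSq_sigma hσ] at h
    rw [mul_comm]
    rw [h]
    norm_num
  set u : ℂ → ℝ := fun z => (1 - Complex.abs (g z)) / (1 - Complex.abs z) with hu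
  set α := liminf (fun z : ℂ => ((u z : ℝ) : EReal)) (nhdsWithin σ (Metric.ball (0:ℂ) 1))
    with hα
  have hballu : ∀ z : ℂ, Complex.abs z < 1 → 0 ≤ u z ∧ Complex.abs (g z) < 1 := by
    intro z hz
    have hgz : Complex.abs (g z) < 1 := mem_ball_iff_abs.1 (hmaps (mem_ball_iff_abs.2 hz))
    refine ⟨div_nonneg (by linarith) (by linarith), hgz⟩
  have h0 : (0:EReal) ≤ α := by
    rw [hα]
    refine le_liminf_of_le (by isBoundedDefault) ?_
    filter_upwards [eventually_mem_nhdsWithin] with z hz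
    exact EReal.coe_nonneg.2 (hballu z (mem_ball_iff_abs.1 hz)).1
  set a := α.toReal with ha
  have hαne : α ≠ ⊥ := by
    intro h
    rw [h] at h0
    simp at h0
  have hcoe : ((a : ℝ) : EReal) = α := EReal.coe_toReal hfin.ne hαne
  have ha0 : 0 ≤ a := by
    have h2 := h0
    rw [← hcoe] at h2
    exact_mod_cast h2
  -- construct the minimizing sequence
  have hseq : ∀ n : ℕ, ∃ z : ℂ, Complex.abs z < 1 ∧ Complex.abs (z - σ) < 1/(n+1) ∧
      u z < a + 1/(n+1) := by
    intro n
    have hn : (0:ℝ) < 1/(n+1) := by positivity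
    have hlt : α < ((a + 1/(n+1) : ℝ) : EReal) := by
      rw [← hcoe]
      exact_mod_cast (by linarith : a < a + 1/(n+1))
    rw [hα] at hlt
    have hfreq : ∃ᶠ z in nhdsWithin σ (Metric.ball (0:ℂ) 1),
        ((u z : ℝ) : EReal) < ((a + 1/(n+1) : ℝ) : EReal) :=
      frequently_lt_of_liminf_lt (by isBoundedDefault) hlt
    have hev1 : ∀ᶠ z in nhdsWithin σ (Metric.ball (0:ℂ) 1),
        Complex.abs (z - σ) < 1/(n+1) := by
      refine Filter.Eventually.filter_mono nhdsWithin_le_nhds ?_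
      refine Filter.eventually_of_mem (Metric.ball_mem_nhds σ hn) ?_
      intro z hz
      rwa [Metric.mem_ball, Complex.dist_eq] at hz
    obtain ⟨z, hz⟩ := (hfreq.and_eventually (hev1.and eventually_mem_nhdsWithin)).exists
    exact ⟨z, mem_ball_iff_abs.1 hz.2.2, hz.2.1, EReal.coe_lt_coe_iff.1 hz.1⟩
  choose zs hz1 hz2 hz3 using hseq
  have htends : Tendsto zs atTop (nhds σ) := by
    rw [tendsto_iff_dist_tendsto_zero]
    refine squeeze_zero (fun n => dist_nonneg) (fun n => ?_)
      tendsto_one_div_add_atTop_nhds_zero_nat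
    rw [Complex.dist_eq]
    exact (hz2 n).le
  have htendsW : Tendsto zs atTop (nhdsWithin σ (Metric.ball (0:ℂ) 1)) :=
    tendsto_nhdsWithin_iff.2 ⟨htends,
      Filter.Eventually.of_forall (fun n => mem_ball_iff_abs.2 (hz1 n))⟩
  have hu_tend : Tendsto (fun n => u (zs n)) atTop (nhds a) := by
    rw [tendsto_order]
    constructor
    · intro b hb
      have hblt : ((b:ℝ):EReal) < α := by
        rw [← hcoe]
        exact_mod_cast hb
      rw [hα] at hblt
      have hev := eventually_lt_of_lt_liminf hblt
      have hev2 := htendsW.eventually hev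
      filter_upwards [hev2] with n hn
      exact EReal.coe_lt_coe_iff.1 hn
    · intro b hb
      have hev2 : ∀ᶠ n : ℕ in atTop, 1/((n:ℝ)+1) < b - a := by
        have := tendsto_one_div_add_atTop_nhds_zero_nat (𝕜 := ℝ)
        exact this.eventually_lt_const (by linarith)
      filter_upwards [hev2] with n hn
      have := hz3 n
      linarith
  have habs1 : Tendsto (fun n => Complex.abs (zs n)) atTop (nhds 1) := by
    have h1 := (Complex.continuous_abs.tendsto σ).comp htends
    rwa [hσ] at h1
  have hgabs : Tendsto (fun n => Complex.abs (g (zs n))) atTop (nhds 1) := by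
    have h1 : Tendsto (fun n => u (zs n) * (1 - Complex.abs (zs n))) atTop
        (nhds (a * (1-1))) := hu_tend.mul (tendsto_const_nhds.sub habs1)
    have h2 : (fun n => u (zs n) * (1 - Complex.abs (zs n)))
        = fun n => 1 - Complex.abs (g (zs n)) := by
      funext n
      simp only [hu]
      rw [div_mul_cancel₀]
      exact ne_of_gt (by linarith [hz1 n])
    rw [h2] at h1
    norm_num at h1
    have h3 : Tendsto (fun n => 1 - (1 - Complex.abs (g (zs n)))) atTop (nhds (1 - 0)) :=
      tendsto_const_nhds.sub h1
    simpa using h3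
  obtain ⟨τ, hτmem, φ, hφmono, hφtend⟩ :=
    (isCompact_closedBall (0:ℂ) 1).tendsto_subseq
      (fun n => Metric.ball_subset_closedBall (hmaps (mem_ball_iff_abs.2 (hz1 n))))
  have hτ1 : Complex.abs τ = 1 :=
    tendsto_nhds_unique ((Complex.continuous_abs.tendsto τ).comp hφtend)
      (hgabs.comp hφmono.tendsto_atTop)
  have hφat : Tendsto φ atTop atTop := hφmono.tendsto_atTop
  -- the limiting Schwarz--Pick inequality
  have main : ∀ z : ℂ, Complex.abs z < 1 →
      (1 - normSq z) * normSq (1 - (starRingEnd ℂ) τ * g z)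
        ≤ (1 - normSq (g z)) * a * normSq (1 - (starRingEnd ℂ) σ * z) := by
    intro z hz
    set q : ℕ → ℝ := fun k => (1 - normSq (g (zs (φ k)))) / (1 - normSq (zs (φ k))) with hq
    have hzφ : ∀ k, Complex.abs (zs (φ k)) < 1 := fun k => hz1 (φ k)
    have hgφ : ∀ k, Complex.abs (g (zs (φ k))) < 1 := fun k => (hballu _ (hzφ k)).2
    have hk : ∀ k, (1 - normSq z) * normSq (1 - (starRingEnd ℂ) (g (zs (φ k))) * g z)
        ≤ (1 - normSq (g z)) * q k * normSq (1 - (starRingEnd ℂ) (zs (φ k)) * z) := by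
      intro k
      have hpos : 0 < 1 - normSq (zs (φ k)) := by linarith [normSq_lt_one (hzφ k)]
      have hSP := schwarz_pick_normSq hg hmaps hz (hzφ k)
      rw [← mul_le_mul_iff_of_pos_right hpos]
      calc (1 - normSq z) * normSq (1 - (starRingEnd ℂ) (g (zs (φ k))) * g z)
            * (1 - normSq (zs (φ k)))
          = (1 - normSq z) * (1 - normSq (zs (φ k)))
            * normSq (1 - (starRingEnd ℂ) (g (zs (φ k))) * g z) := by ring
        _ ≤ (1 - normSq (g z)) * (1 - normSq (g (zs (φ k))))
            * normSq (1 - (starRingEnd ℂ) (zs (φ k)) * z) := hSP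
        _ = (1 - normSq (g z)) * q k * normSq (1 - (starRingEnd ℂ) (zs (φ k)) * z)
            * (1 - normSq (zs (φ k))) := by
            simp only [hq]
            field_simp
    have hzφtend : Tendsto (fun k => zs (φ k)) atTop (nhds σ) := htends.comp hφat
    have hLHS : Tendsto
        (fun k => (1 - normSq z) * normSq (1 - (starRingEnd ℂ) (g (zs (φ k))) * g z)) atTop
        (nhds ((1 - normSq z) * normSq (1 - (starRingEnd ℂ) τ * g z))) := by
      apply Tendsto.const_mul
      exact (Complex.continuous_normSq.tendsto _).comp
        (tendsto_const_nhds.sub (((Complex.continuous_conj.tendsto τ).comp hφtend).mul_const _))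
    have hfact : ∀ w : ℂ, 1 - normSq w = (1 - Complex.abs w) * (1 + Complex.abs w) := by
      intro w
      linear_combination Complex.sq_abs w
    have hq_eq : ∀ k, q k = u (zs (φ k))
        * ((1 + Complex.abs (g (zs (φ k)))) / (1 + Complex.abs (zs (φ k)))) := by
      intro k
      simp only [hq, hu]
      rw [hfact (g (zs (φ k))), hfact (zs (φ k))]
      have h1 : (0:ℝ) < 1 - Complex.abs (zs (φ k)) := by linarith [hzφ k]
      have h2 : (0:ℝ) < 1 + Complex.abs (zs (φ k)) := by
        linarith [Complex.abs.nonneg (zs (φ k))]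
      field_simp
    have hqlim : Tendsto q atTop (nhds a) := by
      have h1 : Tendsto (fun k => u (zs (φ k))
          * ((1 + Complex.abs (g (zs (φ k)))) / (1 + Complex.abs (zs (φ k))))) atTop
          (nhds (a * ((1 + 1) / (1 + 1)))) :=
        (hu_tend.comp hφat).mul
          (((tendsto_const_nhds.add (hgabs.comp hφat))).div
            (tendsto_const_nhds.add (habs1.comp hφat)) (by norm_num))
      norm_num at h1
      exact h1.congr (fun k => (hq_eq k).symm)
    have hRHS : Tendsto
        (fun k => (1 - normSq (g z)) * q k * normSq (1 - (starRingEnd ℂ) (zs (φ k)) * z))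
        atTop (nhds ((1 - normSq (g z)) * a * normSq (1 - (starRingEnd ℂ) σ * z))) :=
      (tendsto_const_nhds.mul hqlim).mul
        ((Complex.continuous_normSq.tendsto _).comp
          (tendsto_const_nhds.sub (((Complex.continuous_conj.tendsto σ).comp hzφtend).mul_const _)))
    exact le_of_tendsto_of_tendsto' hLHS hRHS hk
  -- identify τ = σ using the radial limit of g
  have hrad : Tendsto (fun r : ℝ => g ((r:ℂ) * σ)) (nhdsWithin 1 (Set.Iio 1)) (nhds σ) :=
    hlim2.comp (radial_tendsto hσ one_lt_two)
  have hXlim : Tendsto (fun r : ℝ => normSq (1 - (starRingEnd ℂ) τ * g ((r:ℂ)*σ)))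
      (nhdsWithin 1 (Set.Iio 1)) (nhds (normSq (1 - (starRingEnd ℂ) τ * σ))) :=
    ((Complex.continuous_normSq.comp
      (continuous_const.sub (continuous_const.mul continuous_id))).tendsto σ).comp hrad
  have hZlim : Tendsto (fun r : ℝ => a * (1 - r)) (nhdsWithin 1 (Set.Iio 1))
      (nhds (a * (1 - 1))) :=
    tendsto_const_nhds.mul (tendsto_const_nhds.sub
      ((continuous_id.tendsto 1).mono_left nhdsWithin_le_nhds))
  have hbound : ∀ᶠ r : ℝ in nhdsWithin 1 (Set.Iio 1),
      normSq (1 - (starRingEnd ℂ) τ * g ((r:ℂ)*σ)) ≤ a * (1 - r) := by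
    filter_upwards [(eventually_gt_nhds one_pos).filter_mono nhdsWithin_le_nhds,
      eventually_mem_nhdsWithin] with r hr0 hr1
    have hr1' : r < 1 := hr1
    have hrm : Complex.abs ((r:ℂ)*σ) = r := by
      rw [map_mul, hσ, mul_one, Complex.abs_ofReal, abs_of_pos hr0]
    have hzr : Complex.abs ((r:ℂ)*σ) < 1 := by rw [hrm]; exact hr1'
    have hm := main ((r:ℂ)*σ) hzr
    have e1 : normSq ((r:ℂ)*σ) = r * r := by
      rw [Complex.normSq_mul, Complex.normSq_ofReal, normSq_sigma hσ, mul_one]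
    have e2 : (starRingEnd ℂ) σ * ((r:ℂ)*σ) = (r:ℂ) := by
      have h := hσσ
      linear_combination (r:ℂ) * h
    have e3 : normSq (1 - (starRingEnd ℂ) σ * ((r:ℂ)*σ)) = (1-r)*(1-r) := by
      rw [e2, show (1:ℂ) - (r:ℂ) = ((1 - r : ℝ):ℂ) by push_cast; ring,
        Complex.normSq_ofReal]
    rw [e1, e3] at hm
    set X := normSq (1 - (starRingEnd ℂ) τ * g ((r:ℂ)*σ)) with hX
    have hX0 : 0 ≤ X := normSq_nonneg _
    have hnsg : 0 ≤ normSq (g ((r:ℂ)*σ)) := normSq_nonneg _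
    have s1 : (1 - normSq (g ((r:ℂ)*σ))) * a * ((1-r)*(1-r)) ≤ a * ((1-r)*(1-r)) := by
      have hgea : 0 ≤ normSq (g ((r:ℂ)*σ)) * a * ((1-r)*(1-r)) :=
        mul_nonneg (mul_nonneg hnsg ha0) (mul_self_nonneg _)
      nlinarith [hgea]
    have s2 : (1-r)*((1+r)*X) ≤ (1-r)*(a*(1-r)) := by nlinarith [hm, s1]
    have s3 : (1+r)*X ≤ a*(1-r) := by
      have h1r : (0:ℝ) < 1 - r := by linarith
      exact le_of_mul_le_mul_left s2 h1r
    nlinarith [mul_nonneg hr0.le hX0]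
  have hτσle : normSq (1 - (starRingEnd ℂ) τ * σ) ≤ a * (1 - 1) :=
    le_of_tendsto_of_tendsto hXlim hZlim hbound
  have hτσ0 : 1 - (starRingEnd ℂ) τ * σ = 0 := by
    have h1 := normSq_nonneg (1 - (starRingEnd ℂ) τ * σ)
    have h2 : normSq (1 - (starRingEnd ℂ) τ * σ) = 0 := by
      apply le_antisymm _ h1
      simpa using hτσle
    exact normSq_eq_zero.1 h2
  have hτeq : τ = σ := by
    have hconj : (starRingEnd ℂ) τ * σ = 1 := by linear_combination -hτσ0
    have h3 : ((starRingEnd ℂ) τ - (starRingEnd ℂ) σ) * σ = 0 := by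
      linear_combination hconj - hσσ
    have h4 : (starRingEnd ℂ) τ = (starRingEnd ℂ) σ := by
      rcases mul_eq_zero.1 h3 with h | h
      · linear_combination h
      · exact absurd h hσ0
    have h5 := congrArg (starRingEnd ℂ) h4
    simpa using h5
  rw [hτeq] at main
  -- positivity of a
  have hapos : 0 < a := by
    rcases lt_or_eq_of_le ha0 with h | h
    · exact h
    · exfalso
      have h00 := main 0 (by simp)
      rw [← h] at h00
      simp only [map_zero, sub_zero, one_mul, zero_mul, mul_zero] at h00
      have h01 : normSq (1 - (starRingEnd ℂ) σ * g 0) = 0 := by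
        have := normSq_nonneg (1 - (starRingEnd ℂ) σ * g 0)
        linarith
      have h02 : (starRingEnd ℂ) σ * g 0 = 1 := by
        have := normSq_eq_zero.1 h01
        linear_combination -this
      have h03 : Complex.abs (g 0) < 1 := mem_ball_iff_abs.1 (hmaps (by simp))
      have h04 := congrArg Complex.abs h02
      rw [map_mul, map_one, Complex.abs_conj, hσ, one_mul] at h04
      linarith
  refine ⟨hapos, ?_⟩
  intro z hz
  have hm := main z hz
  have hw : ∀ w : ℂ, normSq (1 - (starRingEnd ℂ) σ * w) = normSq (σ - w) := by
    intro w
    have he : 1 - (starRingEnd ℂ) σ * w = (starRingEnd ℂ) σ * (σ - w) := by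
      linear_combination -hσσ
    rw [he, Complex.normSq_mul, Complex.normSq_conj, normSq_sigma hσ, one_mul]
  rw [hw (g z), hw z] at hm
  calc (1 - normSq z) * normSq (σ - g z)
      ≤ (1 - normSq (g z)) * a * normSq (σ - z) := hm
    _ = a * ((1 - normSq (g z)) * normSq (σ - z)) := by ring

end JWCaux

open JWCaux in
/-- Julia-Wolff-Carathéodory: if `g : 𝔻 → 𝔻` is holomorphic with
angular limit `σ` at `σ ∈ ∂𝔻`, then `g` has a finite angular derivative at `σ`
(i.e. `∠lim_{z→σ} (σ - g z)/(σ - z)` exists finitely) if and only if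
`liminf_{z→σ} (1-|g z|)/(1-|z|) < +∞`; and in that case this angular limit
equals the liminf. -/
theorem julia_wolff_caratheodory (g : ℂ → ℂ) (σ : ℂ) (hσ : ‖σ‖ = 1)
    (hg : DifferentiableOn ℂ g (Metric.ball (0:ℂ) 1))
    (hmaps : Set.MapsTo g (Metric.ball (0:ℂ) 1) (Metric.ball (0:ℂ) 1))
    (hlim : ∀ M > (1:ℝ), Tendsto g (nhdsWithin σ (stolz σ M)) (nhds σ)) :
    ((∃ L : ℂ, ∀ M > (1:ℝ),
        Tendsto (fun z => (σ - g z) / (σ - z)) (nhdsWithin σ (stolz σ M)) (nhds L)) ↔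
      liminf (fun z : ℂ => (((1 - ‖g z‖) / (1 - ‖z‖) : ℝ) : EReal))
        (nhdsWithin σ (Metric.ball (0:ℂ) 1)) < ⊤) ∧
    (∀ L : ℂ,
      (∀ M > (1:ℝ),
        Tendsto (fun z => (σ - g z) / (σ - z)) (nhdsWithin σ (stolz σ M)) (nhds L)) →
      L = ((liminf
        (fun z : ℂ => (((1 - ‖g z‖) / (1 - ‖z‖) : ℝ) : EReal))
        (nhdsWithin σ (Metric.ball (0:ℂ) 1))).toReal : ℂ)) := by
  set α := liminf (fun z : ℂ => (((1 - ‖g z‖) / (1 - ‖z‖) : ℝ) : EReal))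
    (nhdsWithin σ (Metric.ball (0:ℂ) 1)) with hα
  have h0 : (0:EReal) ≤ α := by
    rw [hα]
    refine le_liminf_of_le (by isBoundedDefault) ?_
    filter_upwards [eventually_mem_nhdsWithin] with z hz
    have hz1 : ‖z‖ < 1 := mem_ball_iff_abs.1 hz
    have hgz : ‖g z‖ < 1 := mem_ball_iff_abs.1 (hmaps hz)
    exact EReal.coe_nonneg.2 (div_nonneg (by linarith) (by linarith))
  have hαne : α ≠ ⊥ := by
    intro h
    rw [h] at h0
    simp at h0
  have machine : α < ⊤ → ∃ b : ℝ, 0 < b ∧ α = ((b:ℝ):EReal) ∧ ∀ M > (1:ℝ),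
      Tendsto (fun z => (σ - g z) / (σ - z)) (nhdsWithin σ (stolz σ M)) (nhds ((b:ℝ):ℂ)) := by
    intro hfin
    obtain ⟨hapos, hjulia⟩ := julia_lemma hσ hg hmaps (hlim 2 one_lt_two) (hα ▸ hfin)
    have hjulia' : ∀ z : ℂ, Complex.abs z < 1 →
        (1 - Complex.normSq z) * Complex.normSq (σ - g z)
          ≤ α.toReal * ((1 - Complex.normSq (g z)) * Complex.normSq (σ - z)) := by
      intro z hz
      exact hjulia z hz
    obtain ⟨b, hb0, hba, htend⟩ := main_B hσ hg hmaps hapos hjulia'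
    have hle : α ≤ ((b:ℝ):EReal) := by
      have h2 := liminf_le_radial hσ (htend 2 one_lt_two)
      rwa [show Complex.abs ((b:ℝ):ℂ) = b by
        rw [Complex.abs_ofReal]; exact abs_of_pos hb0] at h2
    have hcoe : ((α.toReal : ℝ) : EReal) = α := EReal.coe_toReal hfin.ne hαne
    have htr : α.toReal ≤ b := by
      rw [← EReal.coe_le_coe_iff, hcoe]
      exact hle
    have hba' : b = α.toReal := le_antisymm hba htr
    refine ⟨b, hb0, ?_, htend⟩
    rw [hba', hcoe]
  constructor
  · constructor
    · rintro ⟨L, hL⟩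
      exact lt_of_le_of_lt (liminf_le_radial hσ (hL 2 one_lt_two)) (EReal.coe_lt_top _)
    · intro hfin
      obtain ⟨b, _, _, htend⟩ := machine hfin
      exact ⟨((b:ℝ):ℂ), htend⟩
  · intro L hL
    have hfin : α < ⊤ :=
      lt_of_le_of_lt (liminf_le_radial hσ (hL 2 one_lt_two)) (EReal.coe_lt_top _)
    obtain ⟨b, hb0, hbα, htend⟩ := machine hfin
    have hne : (nhdsWithin σ (stolz σ 2)).NeBot :=
      Filter.neBot_of_le (radial_tendsto hσ one_lt_two)
    have hLb : L = ((b:ℝ):ℂ) := tendsto_nhds_unique (hL 2 one_lt_two) (htend 2 one_lt_two)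
    rw [hLb]
    have hb : α.toReal = b := by
      rw [hbα]
      exact EReal.toReal_coe b
    rw [hb]
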